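/- Let q be a positive power of an odd prime p, let k ≥ 1 be an integer, and let M_a, M_b, M_c be arbitrary k×k matrices over 𝔽_q. Then: (1) the assignments a ↦ V_a, b ↦ V_b, c ↦ V_c extend to a group homomorphism 𝒢_{C̃₂}(p) → SL_{4k}(𝔽_q); and (2) the assignments a ↦ V'_a, b ↦ V'_b, c ↦ V'_c extend to a group homomorphism 𝒢_{HB₂⁽²⁾}(p) → SL_{4k}(𝔽_q). -/

import Mathlib

set_option maxHeartbeats 1000000


/-- The commutator [x,y] = x⁻¹y⁻¹xy (the convention used in the paper). -/
def pc {G : Type*} [Group G] (x y : G) : G := x⁻¹ * y⁻¹ * x * y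

/-- The relators of the Kac–Moody–Steinberg group 𝒢_{C̃₂}(p):
a^p, b^p, c^p, [a,b], [b,c,b], [b,c,c,b], [b,c,c,c], [a,c,a], [a,c,c,a], [a,c,c,c]. -/
def kmsC2Rels (p : ℕ) : Set (FreeGroup (Fin 3)) :=
  let a : FreeGroup (Fin 3) := FreeGroup.of 0
  let b : FreeGroup (Fin 3) := FreeGroup.of 1
  let c : FreeGroup (Fin 3) := FreeGroup.of 2
  {a ^ p, b ^ p, c ^ p, pc a b,
   pc (pc b c) b, pc (pc (pc b c) c) b, pc (pc (pc b c) c) c,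
   pc (pc a c) a, pc (pc (pc a c) c) a, pc (pc (pc a c) c) c}

/-- The relators of the Kac–Moody–Steinberg group 𝒢_{HB₂⁽²⁾}(p):
a^p, b^p, c^p, [a,b,a], [a,b,b], [c,b,c], [c,b,b,c], [c,b,b,b], [c,a,c], [c,a,a,c],
[c,a,a,a]. -/
def kmsHB22Rels (p : ℕ) : Set (FreeGroup (Fin 3)) :=
  let a : FreeGroup (Fin 3) := FreeGroup.of 0
  let b : FreeGroup (Fin 3) := FreeGroup.of 1
  let c : FreeGroup (Fin 3) := FreeGroup.of 2
  {a ^ p, b ^ p, c ^ p,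
   pc (pc a b) a, pc (pc a b) b,
   pc (pc c b) c, pc (pc (pc c b) b) c, pc (pc (pc c b) b) b,
   pc (pc c a) c, pc (pc (pc c a) a) c, pc (pc (pc c a) a) a}

/-- An n×n block matrix with k×k blocks: identity blocks on the diagonal, and
off-diagonal (i,j)-block `off i j`. -/
def blockOne {n k : ℕ} {F : Type*} [CommRing F]
    (off : Fin n → Fin n → Matrix (Fin k) (Fin k) F) :
    Matrix (Fin n × Fin k) (Fin n × Fin k) F :=
  fun x y =>
    if x.1 = y.1 then (1 : Matrix (Fin k) (Fin k) F) x.2 y.2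
    else off x.1 y.1 x.2 y.2

/-- The 4k×4k matrix V_a: identity diagonal blocks, block (3,1) equal to M_a. -/
def Va {k : ℕ} {F : Type*} [CommRing F] (Ma : Matrix (Fin k) (Fin k) F) :
    Matrix (Fin 4 × Fin k) (Fin 4 × Fin k) F :=
  blockOne (fun i j => if i = 2 ∧ j = 0 then Ma else 0)

/-- The 4k×4k matrix V_b: identity diagonal blocks, block (4,2) equal to M_b. -/
def Vb {k : ℕ} {F : Type*} [CommRing F] (Mb : Matrix (Fin k) (Fin k) F) :
    Matrix (Fin 4 × Fin k) (Fin 4 × Fin k) F :=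
  blockOne (fun i j => if i = 3 ∧ j = 1 then Mb else 0)

/-- The 4k×4k matrix V_c: identity diagonal blocks, blocks (1,4) and (2,3) equal
to M_c. -/
def Vc {k : ℕ} {F : Type*} [CommRing F] (Mc : Matrix (Fin k) (Fin k) F) :
    Matrix (Fin 4 × Fin k) (Fin 4 × Fin k) F :=
  blockOne (fun i j => if (i = 0 ∧ j = 3) ∨ (i = 1 ∧ j = 2) then Mc else 0)

/-- The 4k×4k matrix V'_a: identity diagonal blocks, blocks (1,4) and (2,3) equal
to M_a. -/
def Va' {k : ℕ} {F : Type*} [CommRing F] (Ma : Matrix (Fin k) (Fin k) F) :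
    Matrix (Fin 4 × Fin k) (Fin 4 × Fin k) F :=
  blockOne (fun i j => if (i = 0 ∧ j = 3) ∨ (i = 1 ∧ j = 2) then Ma else 0)

/-- The 4k×4k matrix V'_b: identity diagonal blocks, block (2,1) equal to M_b and block
(3,4) equal to −M_b. -/
def Vb' {k : ℕ} {F : Type*} [CommRing F] (Mb : Matrix (Fin k) (Fin k) F) :
    Matrix (Fin 4 × Fin k) (Fin 4 × Fin k) F :=
  blockOne (fun i j =>
    if i = 1 ∧ j = 0 then Mb else if i = 2 ∧ j = 3 then -Mb else 0)

/-- The 4k×4k matrix V'_c: identity diagonal blocks, block (4,2) equal to M_c. -/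
def Vc' {k : ℕ} {F : Type*} [CommRing F] (Mc : Matrix (Fin k) (Fin k) F) :
    Matrix (Fin 4 × Fin k) (Fin 4 × Fin k) F :=
  blockOne (fun i j => if i = 3 ∧ j = 1 then Mc else 0)


namespace KMSAux

open Matrix

theorem pc_eq_one_of_comm {G : Type*} [Group G] {x y : G} (h : x * y = y * x) : pc x y = 1 := by
  rw [pc, mul_assoc, ← _root_.mul_inv_rev, h, inv_mul_cancel]

theorem pc_inv {G : Type*} [Group G] (x y : G) : (pc x y)⁻¹ = pc y x := by
  simp [pc, _root_.mul_inv_rev, mul_assoc]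

theorem map_pc {G H : Type*} [Group G] [Group H] (f : G →* H) (x y : G) :
    f (pc x y) = pc (f x) (f y) := by simp [pc]

theorem pc_val {M : Type*} [Monoid M] (x y : Mˣ) :
    ((pc x y : Mˣ) : M) = ↑x⁻¹ * ↑y⁻¹ * ↑x * ↑y := by simp [pc]

/-- A unit `1 + N` for `N` of square zero. -/
def sqUnit {S : Type*} [Ring S] (N : S) (h : N * N = 0) : Sˣ where
  val := 1 + N
  inv := 1 - N
  val_inv := by
    have : (1 + N) * (1 - N) = 1 - N * N := by noncomm_ring
    rw [this, h, sub_zero]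
  inv_val := by
    have : (1 - N) * (1 + N) = 1 - N * N := by noncomm_ring
    rw [this, h, sub_zero]

@[simp] theorem sqUnit_val {S : Type*} [Ring S] (N : S) (h : N * N = 0) :
    ((sqUnit N h : Sˣ) : S) = 1 + N := rfl

@[simp] theorem sqUnit_inv {S : Type*} [Ring S] (N : S) (h : N * N = 0) :
    (((sqUnit N h)⁻¹ : Sˣ) : S) = 1 - N := rfl

theorem one_add_sq_pow {S : Type*} [Ring S] {N : S} (h : N * N = 0) :
    ∀ n : ℕ, (1 + N) ^ n = 1 + n • N
  | 0 => by simp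
  | (n + 1) => by
    rw [pow_succ, one_add_sq_pow h n]
    have h2 : (n • N) * N = 0 := by rw [smul_mul_assoc, h, smul_zero]
    simp only [mul_add, add_mul, one_mul, mul_one, h2, add_zero, succ_nsmul]
    abel

theorem sqUnit_pow_eq_one {S : Type*} [Ring S] {N : S} (h : N * N = 0) {p : ℕ}
    (hp : (p : S) = 0) : sqUnit N h ^ p = 1 := by
  apply Units.ext
  rw [Units.val_pow_eq_pow_val, sqUnit_val, one_add_sq_pow h, nsmul_eq_mul, hp, zero_mul,
    add_zero, Units.val_one]

theorem toGL_val {n : Type*} [DecidableEq n] [Fintype n] {R : Type*} [CommRing R]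
    (g : Matrix.SpecialLinearGroup n R) :
    ((Matrix.SpecialLinearGroup.toGL g : GL n R) : Matrix n n R) = ↑g := rfl

theorem det_blockOne {n k : ℕ} {F : Type*} [CommRing F]
    (off : Fin n → Fin n → Matrix (Fin k) (Fin k) F) (b : Fin n → ℕ)
    (h : ∀ i j, i ≠ j → ¬ b i < b j → off i j = 0) :
    (blockOne off).det = 1 := by
  have hbt : (blockOne off).BlockTriangular (fun x => b x.1) := by
    intro x y hlt
    have hne : x.1 ≠ y.1 := by
      intro e
      simp only [e] at hlt
      exact lt_irrefl _ hlt
    have h0 : off x.1 y.1 = 0 := h _ _ hne (not_lt_of_gt hlt)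
    simp [blockOne, hne, h0]
  rw [hbt.det]
  apply Finset.prod_eq_one
  intro a _
  have : (blockOne off).toSquareBlock (fun x => b x.1) a = 1 := by
    ext ⟨x, hx⟩ ⟨y, hy⟩
    rw [Matrix.toSquareBlock_def]
    by_cases hxy : x.1 = y.1
    · by_cases hxy2 : x.2 = y.2
      · have : x = y := Prod.ext hxy hxy2
        subst this
        simp [blockOne, Matrix.one_apply]
      · have hne : (⟨x, hx⟩ : {i // b i.1 = a}) ≠ ⟨y, hy⟩ := by
          simp only [ne_eq, Subtype.mk_eq_mk]
          exact fun e => hxy2 (by rw [e])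
        simp [blockOne, hxy, Matrix.one_apply, hxy2, hne]
    · have h0 : off x.1 y.1 = 0 := by
        apply h _ _ hxy
        rw [hx, hy]
        exact lt_irrefl _
      have hne : (⟨x, hx⟩ : {i // b i.1 = a}) ≠ ⟨y, hy⟩ := by
        simp only [ne_eq, Subtype.mk_eq_mk]
        exact fun e => hxy (by rw [e])
      simp [blockOne, hxy, h0, Matrix.one_apply, hne]
  rw [this, det_one]

section Corr
variable {k : ℕ} {F : Type*} [CommRing F]

theorem blockOne_eq (off : Fin 4 → Fin 4 → Matrix (Fin k) (Fin k) F)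
    (M : Matrix (Fin 4) (Fin 4) (Matrix (Fin k) (Fin k) F))
    (h : ∀ i j, M i j = if i = j then 1 else off i j) :
    blockOne off = Matrix.compRingEquiv (Fin 4) (Fin k) F M := by
  ext ⟨i, x⟩ ⟨j, y⟩
  simp only [Matrix.compRingEquiv_apply, Matrix.comp_apply, RingEquiv.coe_mk,
    Equiv.coe_fn_mk, AddEquiv.coe_mk, blockOne, h]
  by_cases hij : i = j <;> simp [hij]

theorem Va_eq (Ma : Matrix (Fin k) (Fin k) F) :
    Va Ma = Matrix.compRingEquiv (Fin 4) (Fin k) F (1 + Matrix.single 2 0 Ma) := by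
  refine blockOne_eq _ _ fun i j => ?_
  fin_cases i <;> fin_cases j <;>
    simp [Matrix.one_apply, Matrix.add_apply]

theorem Vb_eq (Mb : Matrix (Fin k) (Fin k) F) :
    Vb Mb = Matrix.compRingEquiv (Fin 4) (Fin k) F (1 + Matrix.single 3 1 Mb) := by
  refine blockOne_eq _ _ fun i j => ?_
  fin_cases i <;> fin_cases j <;>
    simp [Matrix.one_apply, Matrix.add_apply]

theorem Vc_eq (Mc : Matrix (Fin k) (Fin k) F) :
    Vc Mc = Matrix.compRingEquiv (Fin 4) (Fin k) F
      (1 + (Matrix.single 0 3 Mc + Matrix.single 1 2 Mc)) := by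
  refine blockOne_eq _ _ fun i j => ?_
  fin_cases i <;> fin_cases j <;>
    simp [Matrix.one_apply, Matrix.add_apply]

theorem Va'_eq (Ma : Matrix (Fin k) (Fin k) F) :
    Va' Ma = Matrix.compRingEquiv (Fin 4) (Fin k) F
      (1 + (Matrix.single 0 3 Ma + Matrix.single 1 2 Ma)) := by
  refine blockOne_eq _ _ fun i j => ?_
  fin_cases i <;> fin_cases j <;>
    simp [Matrix.one_apply, Matrix.add_apply]

theorem Vb'_eq (Mb : Matrix (Fin k) (Fin k) F) :
    Vb' Mb = Matrix.compRingEquiv (Fin 4) (Fin k) F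
      (1 + (Matrix.single 1 0 Mb - Matrix.single 2 3 Mb)) := by
  refine blockOne_eq _ _ fun i j => ?_
  fin_cases i <;> fin_cases j <;>
    simp [Matrix.one_apply, Matrix.add_apply, Matrix.sub_apply]

theorem Vc'_eq (Mc : Matrix (Fin k) (Fin k) F) :
    Vc' Mc = Matrix.compRingEquiv (Fin 4) (Fin k) F (1 + Matrix.single 3 1 Mc) := by
  refine blockOne_eq _ _ fun i j => ?_
  fin_cases i <;> fin_cases j <;>
    simp [Matrix.one_apply, Matrix.add_apply]

theorem det_Va (Ma : Matrix (Fin k) (Fin k) F) : (Va Ma).det = 1 := by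
  apply det_blockOne _ ![1, 0, 0, 0]
  intro i j hij hlt
  fin_cases i <;> fin_cases j <;> simp_all

theorem det_Vb (Mb : Matrix (Fin k) (Fin k) F) : (Vb Mb).det = 1 := by
  apply det_blockOne _ ![0, 1, 0, 0]
  intro i j hij hlt
  fin_cases i <;> fin_cases j <;> simp_all

theorem det_Vc (Mc : Matrix (Fin k) (Fin k) F) : (Vc Mc).det = 1 := by
  apply det_blockOne _ ![0, 0, 1, 1]
  intro i j hij hlt
  fin_cases i <;> fin_cases j <;> simp_all

theorem det_Va' (Ma : Matrix (Fin k) (Fin k) F) : (Va' Ma).det = 1 := by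
  apply det_blockOne _ ![0, 0, 1, 1]
  intro i j hij hlt
  fin_cases i <;> fin_cases j <;> simp_all

theorem det_Vb' (Mb : Matrix (Fin k) (Fin k) F) : (Vb' Mb).det = 1 := by
  apply det_blockOne _ ![1, 0, 0, 1]
  intro i j hij hlt
  fin_cases i <;> fin_cases j <;> simp_all

theorem det_Vc' (Mc : Matrix (Fin k) (Fin k) F) : (Vc' Mc).det = 1 := by
  apply det_blockOne _ ![0, 1, 0, 0]
  intro i j hij hlt
  fin_cases i <;> fin_cases j <;> simp_all

end Corr

section Idents
variable {α : Type*} [Ring α] (A B C : α)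
local notation "e" => Matrix.single (α := α) (m := Fin 4) (n := Fin 4)

theorem r1_ab_comm :
    (1 + e 2 0 A) * (1 + e 3 1 B) = (1 + e 3 1 B) * (1 + e 2 0 A) := by
  simp [mul_add, add_mul, mul_sub, sub_mul, mul_assoc]; abel

theorem r1bc_x :
    (1 - e 3 1 B) * (1 - (e 0 3 C + e 1 2 C)) * (1 + e 3 1 B) * (1 + (e 0 3 C + e 1 2 C))
      = 1 + (e 3 2 (B * C) - e 0 1 (C * B) - e 0 2 (C * (B * C))) := by
  simp [mul_add, add_mul, mul_sub, sub_mul, mul_assoc]; abel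

theorem r1bc_xi :
    (1 - (e 0 3 C + e 1 2 C)) * (1 - e 3 1 B) * (1 + (e 0 3 C + e 1 2 C)) * (1 + e 3 1 B)
      = 1 - (e 3 2 (B * C) - e 0 1 (C * B) - e 0 2 (C * (B * C))) := by
  simp [mul_add, add_mul, mul_sub, sub_mul, mul_assoc]; abel

theorem r1bc_comm_b :
    (1 + (e 3 2 (B * C) - e 0 1 (C * B) - e 0 2 (C * (B * C)))) * (1 + e 3 1 B)
      = (1 + e 3 1 B) * (1 + (e 3 2 (B * C) - e 0 1 (C * B) - e 0 2 (C * (B * C)))) := by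
  simp [mul_add, add_mul, mul_sub, sub_mul, mul_assoc]; abel

theorem r1bc_y :
    (1 - (e 3 2 (B * C) - e 0 1 (C * B) - e 0 2 (C * (B * C)))) * (1 - (e 0 3 C + e 1 2 C)) *
      (1 + (e 3 2 (B * C) - e 0 1 (C * B) - e 0 2 (C * (B * C)))) * (1 + (e 0 3 C + e 1 2 C))
      = 1 - e 0 2 (C * (B * C)) - e 0 2 (C * (B * C)) := by
  simp [mul_add, add_mul, mul_sub, sub_mul, mul_assoc]; abel

theorem r1bc_yb :
    (1 - e 0 2 (C * (B * C)) - e 0 2 (C * (B * C))) * (1 + e 3 1 B)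
      = (1 + e 3 1 B) * (1 - e 0 2 (C * (B * C)) - e 0 2 (C * (B * C))) := by
  simp [mul_add, add_mul, mul_sub, sub_mul, mul_assoc]; abel

theorem r1bc_yc :
    (1 - e 0 2 (C * (B * C)) - e 0 2 (C * (B * C))) * (1 + (e 0 3 C + e 1 2 C))
      = (1 + (e 0 3 C + e 1 2 C)) * (1 - e 0 2 (C * (B * C)) - e 0 2 (C * (B * C))) := by
  simp [mul_add, add_mul, mul_sub, sub_mul, mul_assoc]; abel

theorem r1ac_x :
    (1 - e 2 0 A) * (1 - (e 0 3 C + e 1 2 C)) * (1 + e 2 0 A) * (1 + (e 0 3 C + e 1 2 C))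
      = 1 + (e 2 3 (A * C) - e 1 0 (C * A) - e 1 3 (C * (A * C))) := by
  simp [mul_add, add_mul, mul_sub, sub_mul, mul_assoc]; abel

theorem r1ac_xi :
    (1 - (e 0 3 C + e 1 2 C)) * (1 - e 2 0 A) * (1 + (e 0 3 C + e 1 2 C)) * (1 + e 2 0 A)
      = 1 - (e 2 3 (A * C) - e 1 0 (C * A) - e 1 3 (C * (A * C))) := by
  simp [mul_add, add_mul, mul_sub, sub_mul, mul_assoc]; abel

theorem r1ac_comm_a :
    (1 + (e 2 3 (A * C) - e 1 0 (C * A) - e 1 3 (C * (A * C)))) * (1 + e 2 0 A)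
      = (1 + e 2 0 A) * (1 + (e 2 3 (A * C) - e 1 0 (C * A) - e 1 3 (C * (A * C)))) := by
  simp [mul_add, add_mul, mul_sub, sub_mul, mul_assoc]; abel

theorem r1ac_y :
    (1 - (e 2 3 (A * C) - e 1 0 (C * A) - e 1 3 (C * (A * C)))) * (1 - (e 0 3 C + e 1 2 C)) *
      (1 + (e 2 3 (A * C) - e 1 0 (C * A) - e 1 3 (C * (A * C)))) * (1 + (e 0 3 C + e 1 2 C))
      = 1 - e 1 3 (C * (A * C)) - e 1 3 (C * (A * C)) := by
  simp [mul_add, add_mul, mul_sub, sub_mul, mul_assoc]; abel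

theorem r1ac_ya :
    (1 - e 1 3 (C * (A * C)) - e 1 3 (C * (A * C))) * (1 + e 2 0 A)
      = (1 + e 2 0 A) * (1 - e 1 3 (C * (A * C)) - e 1 3 (C * (A * C))) := by
  simp [mul_add, add_mul, mul_sub, sub_mul, mul_assoc]; abel

theorem r1ac_yc :
    (1 - e 1 3 (C * (A * C)) - e 1 3 (C * (A * C))) * (1 + (e 0 3 C + e 1 2 C))
      = (1 + (e 0 3 C + e 1 2 C)) * (1 - e 1 3 (C * (A * C)) - e 1 3 (C * (A * C))) := by
  simp [mul_add, add_mul, mul_sub, sub_mul, mul_assoc]; abel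

theorem r2ab_x :
    (1 - (e 0 3 A + e 1 2 A)) * (1 - (e 1 0 B - e 2 3 B)) * (1 + (e 0 3 A + e 1 2 A)) *
      (1 + (e 1 0 B - e 2 3 B))
      = 1 - e 1 3 (A * B) - e 1 3 (B * A) := by
  simp [mul_add, add_mul, mul_sub, sub_mul, mul_assoc]; abel

theorem r2ab_comm_a :
    (1 - e 1 3 (A * B) - e 1 3 (B * A)) * (1 + (e 0 3 A + e 1 2 A))
      = (1 + (e 0 3 A + e 1 2 A)) * (1 - e 1 3 (A * B) - e 1 3 (B * A)) := by
  simp [mul_add, add_mul, mul_sub, sub_mul, mul_assoc]; abel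

theorem r2ab_comm_b :
    (1 - e 1 3 (A * B) - e 1 3 (B * A)) * (1 + (e 1 0 B - e 2 3 B))
      = (1 + (e 1 0 B - e 2 3 B)) * (1 - e 1 3 (A * B) - e 1 3 (B * A)) := by
  simp [mul_add, add_mul, mul_sub, sub_mul, mul_assoc]; abel

theorem r2cb_x :
    (1 - e 3 1 C) * (1 - (e 1 0 B - e 2 3 B)) * (1 + e 3 1 C) * (1 + (e 1 0 B - e 2 3 B))
      = 1 + (e 3 0 (C * B) + e 2 1 (B * C) + e 2 0 (B * (C * B))) := by
  simp [mul_add, add_mul, mul_sub, sub_mul, mul_assoc]; abel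

theorem r2cb_xi :
    (1 - (e 1 0 B - e 2 3 B)) * (1 - e 3 1 C) * (1 + (e 1 0 B - e 2 3 B)) * (1 + e 3 1 C)
      = 1 - (e 3 0 (C * B) + e 2 1 (B * C) + e 2 0 (B * (C * B))) := by
  simp [mul_add, add_mul, mul_sub, sub_mul, mul_assoc]; abel

theorem r2cb_comm_c :
    (1 + (e 3 0 (C * B) + e 2 1 (B * C) + e 2 0 (B * (C * B)))) * (1 + e 3 1 C)
      = (1 + e 3 1 C) * (1 + (e 3 0 (C * B) + e 2 1 (B * C) + e 2 0 (B * (C * B)))) := by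
  simp [mul_add, add_mul, mul_sub, sub_mul, mul_assoc]; abel

theorem r2cb_y :
    (1 - (e 3 0 (C * B) + e 2 1 (B * C) + e 2 0 (B * (C * B)))) * (1 - (e 1 0 B - e 2 3 B)) *
      (1 + (e 3 0 (C * B) + e 2 1 (B * C) + e 2 0 (B * (C * B)))) * (1 + (e 1 0 B - e 2 3 B))
      = 1 + e 2 0 (B * (C * B)) + e 2 0 (B * (C * B)) := by
  simp [mul_add, add_mul, mul_sub, sub_mul, mul_assoc]; abel

theorem r2cb_yc :
    (1 + e 2 0 (B * (C * B)) + e 2 0 (B * (C * B))) * (1 + e 3 1 C)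
      = (1 + e 3 1 C) * (1 + e 2 0 (B * (C * B)) + e 2 0 (B * (C * B))) := by
  simp [mul_add, add_mul, mul_sub, sub_mul, mul_assoc]; abel

theorem r2cb_yb :
    (1 + e 2 0 (B * (C * B)) + e 2 0 (B * (C * B))) * (1 + (e 1 0 B - e 2 3 B))
      = (1 + (e 1 0 B - e 2 3 B)) * (1 + e 2 0 (B * (C * B)) + e 2 0 (B * (C * B))) := by
  simp [mul_add, add_mul, mul_sub, sub_mul, mul_assoc]; abel

theorem r2ca_x :
    (1 - e 3 1 C) * (1 - (e 0 3 A + e 1 2 A)) * (1 + e 3 1 C) * (1 + (e 0 3 A + e 1 2 A))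
      = 1 + (e 3 2 (C * A) - e 0 1 (A * C) - e 0 2 (A * (C * A))) := by
  simp [mul_add, add_mul, mul_sub, sub_mul, mul_assoc]; abel

theorem r2ca_xi :
    (1 - (e 0 3 A + e 1 2 A)) * (1 - e 3 1 C) * (1 + (e 0 3 A + e 1 2 A)) * (1 + e 3 1 C)
      = 1 - (e 3 2 (C * A) - e 0 1 (A * C) - e 0 2 (A * (C * A))) := by
  simp [mul_add, add_mul, mul_sub, sub_mul, mul_assoc]; abel

theorem r2ca_comm_c :
    (1 + (e 3 2 (C * A) - e 0 1 (A * C) - e 0 2 (A * (C * A)))) * (1 + e 3 1 C)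
      = (1 + e 3 1 C) * (1 + (e 3 2 (C * A) - e 0 1 (A * C) - e 0 2 (A * (C * A)))) := by
  simp [mul_add, add_mul, mul_sub, sub_mul, mul_assoc]; abel

theorem r2ca_y :
    (1 - (e 3 2 (C * A) - e 0 1 (A * C) - e 0 2 (A * (C * A)))) * (1 - (e 0 3 A + e 1 2 A)) *
      (1 + (e 3 2 (C * A) - e 0 1 (A * C) - e 0 2 (A * (C * A)))) * (1 + (e 0 3 A + e 1 2 A))
      = 1 - e 0 2 (A * (C * A)) - e 0 2 (A * (C * A)) := by
  simp [mul_add, add_mul, mul_sub, sub_mul, mul_assoc]; abel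

theorem r2ca_yc :
    (1 - e 0 2 (A * (C * A)) - e 0 2 (A * (C * A))) * (1 + e 3 1 C)
      = (1 + e 3 1 C) * (1 - e 0 2 (A * (C * A)) - e 0 2 (A * (C * A))) := by
  simp [mul_add, add_mul, mul_sub, sub_mul, mul_assoc]; abel

theorem r2ca_ya :
    (1 - e 0 2 (A * (C * A)) - e 0 2 (A * (C * A))) * (1 + (e 0 3 A + e 1 2 A))
      = (1 + (e 0 3 A + e 1 2 A)) * (1 - e 0 2 (A * (C * A)) - e 0 2 (A * (C * A))) := by
  simp [mul_add, add_mul, mul_sub, sub_mul, mul_assoc]; abel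

end Idents

end KMSAux


namespace KMSAux

open Matrix

section Reps
variable {p k : ℕ} {F : Type*} [CommRing F] [CharP F p]

theorem rep1 (hk : 1 ≤ k) (Ma Mb Mc : Matrix (Fin k) (Fin k) F) :
    ∃ ρ : PresentedGroup (kmsC2Rels p) →*
        Matrix.SpecialLinearGroup (Fin 4 × Fin k) F,
      (↑(ρ (PresentedGroup.of 0)) : Matrix (Fin 4 × Fin k) (Fin 4 × Fin k) F) = Va Ma ∧
      (↑(ρ (PresentedGroup.of 1)) : Matrix (Fin 4 × Fin k) (Fin 4 × Fin k) F) = Vb Mb ∧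
      (↑(ρ (PresentedGroup.of 2)) : Matrix (Fin 4 × Fin k) (Fin 4 × Fin k) F) = Vc Mc := by
  haveI : Nonempty (Fin k) := ⟨⟨0, hk⟩⟩
  have hpS : ((p : ℕ) : Matrix (Fin 4) (Fin 4) (Matrix (Fin k) (Fin k) F)) = 0 :=
    CharP.cast_eq_zero _ p
  have hNa : Matrix.single (2 : Fin 4) (0 : Fin 4) Ma * Matrix.single (2 : Fin 4) (0 : Fin 4) Ma
      = (0 : Matrix (Fin 4) (Fin 4) (Matrix (Fin k) (Fin k) F)) := by simp
  have hNb : Matrix.single (3 : Fin 4) (1 : Fin 4) Mb * Matrix.single (3 : Fin 4) (1 : Fin 4) Mb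
      = (0 : Matrix (Fin 4) (Fin 4) (Matrix (Fin k) (Fin k) F)) := by simp
  have hNc : (Matrix.single (0 : Fin 4) (3 : Fin 4) Mc + Matrix.single (1 : Fin 4) (2 : Fin 4) Mc) *
      (Matrix.single (0 : Fin 4) (3 : Fin 4) Mc + Matrix.single (1 : Fin 4) (2 : Fin 4) Mc)
      = (0 : Matrix (Fin 4) (Fin 4) (Matrix (Fin k) (Fin k) F)) := by
    simp [mul_add, add_mul]
  let gu : Fin 3 → (Matrix (Fin 4) (Fin 4) (Matrix (Fin k) (Fin k) F))ˣ :=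
    ![sqUnit _ hNa, sqUnit _ hNb, sqUnit _ hNc]
  let f : Fin 3 → Matrix.SpecialLinearGroup (Fin 4 × Fin k) F :=
    ![⟨Va Ma, det_Va Ma⟩, ⟨Vb Mb, det_Vb Mb⟩, ⟨Vc Mc, det_Vc Mc⟩]
  let φm : Matrix (Fin 4) (Fin 4) (Matrix (Fin k) (Fin k) F) →*
      Matrix (Fin 4 × Fin k) (Fin 4 × Fin k) F :=
    (Matrix.compRingEquiv (Fin 4) (Fin k) F).toRingHom.toMonoidHom
  have hcomp : (Matrix.SpecialLinearGroup.toGL (n := Fin 4 × Fin k) (R := F)).comp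
      (FreeGroup.lift f) = (Units.map φm).comp (FreeGroup.lift gu) := by
    apply FreeGroup.ext_hom
    intro a
    apply Units.ext
    fin_cases a <;>
      simp only [MonoidHom.comp_apply, FreeGroup.lift_apply_of, Fin.zero_eta, Fin.mk_one,
        Matrix.cons_val_zero, Matrix.cons_val_one, Matrix.head_cons, Units.coe_map,
        MonoidHom.coe_coe, toGL_val, sqUnit_val, Fin.isValue, Fin.reduceFinMk,
        Matrix.cons_val_two, Matrix.tail_cons]
    · exact Va_eq Ma
    · exact Vb_eq Mb
    · exact Vc_eq Mc
  have key : ∀ r : FreeGroup (Fin 3), FreeGroup.lift gu r = 1 → FreeGroup.lift f r = 1 := by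
    intro r hg
    have h1 : Matrix.SpecialLinearGroup.toGL (FreeGroup.lift f r) = 1 := by
      have h2 := DFunLike.congr_fun hcomp r
      simp only [MonoidHom.comp_apply] at h2
      rw [h2, hg, _root_.map_one]
    exact Subtype.ext (congrArg Units.val h1)
  have hXbc : Units.val (pc (sqUnit _ hNb) (sqUnit _ hNc))
      = 1 + (Matrix.single 3 2 (Mb * Mc) - Matrix.single 0 1 (Mc * Mb)
          - Matrix.single 0 2 (Mc * (Mb * Mc))) := by
    rw [pc_val, sqUnit_val, sqUnit_val, sqUnit_inv, sqUnit_inv]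
    exact r1bc_x Mb Mc
  have hXbci : Units.val (pc (sqUnit _ hNb) (sqUnit _ hNc))⁻¹
      = 1 - (Matrix.single 3 2 (Mb * Mc) - Matrix.single 0 1 (Mc * Mb)
          - Matrix.single 0 2 (Mc * (Mb * Mc))) := by
    rw [pc_inv, pc_val, sqUnit_val, sqUnit_val, sqUnit_inv, sqUnit_inv]
    exact r1bc_xi Mb Mc
  have hYbc : Units.val (pc (pc (sqUnit _ hNb) (sqUnit _ hNc)) (sqUnit _ hNc))
      = 1 - Matrix.single 0 2 (Mc * (Mb * Mc)) - Matrix.single 0 2 (Mc * (Mb * Mc)) := by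
    rw [pc_val, hXbci, hXbc, sqUnit_val, sqUnit_inv]
    exact r1bc_y Mb Mc
  have hXac : Units.val (pc (sqUnit _ hNa) (sqUnit _ hNc))
      = 1 + (Matrix.single 2 3 (Ma * Mc) - Matrix.single 1 0 (Mc * Ma)
          - Matrix.single 1 3 (Mc * (Ma * Mc))) := by
    rw [pc_val, sqUnit_val, sqUnit_val, sqUnit_inv, sqUnit_inv]
    exact r1ac_x Ma Mc
  have hXaci : Units.val (pc (sqUnit _ hNa) (sqUnit _ hNc))⁻¹
      = 1 - (Matrix.single 2 3 (Ma * Mc) - Matrix.single 1 0 (Mc * Ma)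
          - Matrix.single 1 3 (Mc * (Ma * Mc))) := by
    rw [pc_inv, pc_val, sqUnit_val, sqUnit_val, sqUnit_inv, sqUnit_inv]
    exact r1ac_xi Ma Mc
  have hYac : Units.val (pc (pc (sqUnit _ hNa) (sqUnit _ hNc)) (sqUnit _ hNc))
      = 1 - Matrix.single 1 3 (Mc * (Ma * Mc)) - Matrix.single 1 3 (Mc * (Ma * Mc)) := by
    rw [pc_val, hXaci, hXac, sqUnit_val, sqUnit_inv]
    exact r1ac_y Ma Mc
  have g0 : gu 0 = sqUnit _ hNa := rfl
  have g1 : gu 1 = sqUnit _ hNb := rfl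
  have g2 : gu 2 = sqUnit _ hNc := rfl
  have hrel : ∀ r ∈ kmsC2Rels p, FreeGroup.lift f r = 1 := by
    intro r hr
    refine key r ?_
    simp only [kmsC2Rels, Set.mem_insert_iff, Set.mem_singleton_iff] at hr
    rcases hr with rfl | rfl | rfl | rfl | rfl | rfl | rfl | rfl | rfl | rfl
    · rw [map_pow, FreeGroup.lift_apply_of, g0]
      exact sqUnit_pow_eq_one hNa hpS
    · rw [map_pow, FreeGroup.lift_apply_of, g1]
      exact sqUnit_pow_eq_one hNb hpS
    · rw [map_pow, FreeGroup.lift_apply_of, g2]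
      exact sqUnit_pow_eq_one hNc hpS
    · simp only [map_pc, FreeGroup.lift_apply_of]
      rw [g0, g1]
      refine pc_eq_one_of_comm (Units.ext ?_)
      simp only [Units.val_mul, sqUnit_val]
      exact r1_ab_comm Ma Mb
    · simp only [map_pc, FreeGroup.lift_apply_of]
      rw [g1, g2]
      refine pc_eq_one_of_comm (Units.ext ?_)
      simp only [Units.val_mul, hXbc, sqUnit_val]
      exact r1bc_comm_b Mb Mc
    · simp only [map_pc, FreeGroup.lift_apply_of]
      rw [g1, g2]
      refine pc_eq_one_of_comm (Units.ext ?_)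
      simp only [Units.val_mul, hYbc, sqUnit_val]
      exact r1bc_yb Mb Mc
    · simp only [map_pc, FreeGroup.lift_apply_of]
      rw [g1, g2]
      refine pc_eq_one_of_comm (Units.ext ?_)
      simp only [Units.val_mul, hYbc, sqUnit_val]
      exact r1bc_yc Mb Mc
    · simp only [map_pc, FreeGroup.lift_apply_of]
      rw [g0, g2]
      refine pc_eq_one_of_comm (Units.ext ?_)
      simp only [Units.val_mul, hXac, sqUnit_val]
      exact r1ac_comm_a Ma Mc
    · simp only [map_pc, FreeGroup.lift_apply_of]
      rw [g0, g2]
      refine pc_eq_one_of_comm (Units.ext ?_)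
      simp only [Units.val_mul, hYac, sqUnit_val]
      exact r1ac_ya Ma Mc
    · simp only [map_pc, FreeGroup.lift_apply_of]
      rw [g0, g2]
      refine pc_eq_one_of_comm (Units.ext ?_)
      simp only [Units.val_mul, hYac, sqUnit_val]
      exact r1ac_yc Ma Mc
  refine ⟨PresentedGroup.toGroup hrel, ?_, ?_, ?_⟩ <;>
    rw [PresentedGroup.toGroup.of] <;> rfl

theorem rep2 (hk : 1 ≤ k) (Ma Mb Mc : Matrix (Fin k) (Fin k) F) :
    ∃ ρ : PresentedGroup (kmsHB22Rels p) →*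
        Matrix.SpecialLinearGroup (Fin 4 × Fin k) F,
      (↑(ρ (PresentedGroup.of 0)) : Matrix (Fin 4 × Fin k) (Fin 4 × Fin k) F) = Va' Ma ∧
      (↑(ρ (PresentedGroup.of 1)) : Matrix (Fin 4 × Fin k) (Fin 4 × Fin k) F) = Vb' Mb ∧
      (↑(ρ (PresentedGroup.of 2)) : Matrix (Fin 4 × Fin k) (Fin 4 × Fin k) F) = Vc' Mc := by
  haveI : Nonempty (Fin k) := ⟨⟨0, hk⟩⟩
  have hpS : ((p : ℕ) : Matrix (Fin 4) (Fin 4) (Matrix (Fin k) (Fin k) F)) = 0 :=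
    CharP.cast_eq_zero _ p
  have hNa : (Matrix.single (0 : Fin 4) (3 : Fin 4) Ma + Matrix.single (1 : Fin 4) (2 : Fin 4) Ma) *
      (Matrix.single (0 : Fin 4) (3 : Fin 4) Ma + Matrix.single (1 : Fin 4) (2 : Fin 4) Ma)
      = (0 : Matrix (Fin 4) (Fin 4) (Matrix (Fin k) (Fin k) F)) := by
    simp [mul_add, add_mul]
  have hNb : (Matrix.single (1 : Fin 4) (0 : Fin 4) Mb - Matrix.single (2 : Fin 4) (3 : Fin 4) Mb) *
      (Matrix.single (1 : Fin 4) (0 : Fin 4) Mb - Matrix.single (2 : Fin 4) (3 : Fin 4) Mb)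
      = (0 : Matrix (Fin 4) (Fin 4) (Matrix (Fin k) (Fin k) F)) := by
    simp [mul_sub, sub_mul]
  have hNc : Matrix.single (3 : Fin 4) (1 : Fin 4) Mc * Matrix.single (3 : Fin 4) (1 : Fin 4) Mc
      = (0 : Matrix (Fin 4) (Fin 4) (Matrix (Fin k) (Fin k) F)) := by simp
  let gu : Fin 3 → (Matrix (Fin 4) (Fin 4) (Matrix (Fin k) (Fin k) F))ˣ :=
    ![sqUnit _ hNa, sqUnit _ hNb, sqUnit _ hNc]
  let f : Fin 3 → Matrix.SpecialLinearGroup (Fin 4 × Fin k) F :=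
    ![⟨Va' Ma, det_Va' Ma⟩, ⟨Vb' Mb, det_Vb' Mb⟩, ⟨Vc' Mc, det_Vc' Mc⟩]
  let φm : Matrix (Fin 4) (Fin 4) (Matrix (Fin k) (Fin k) F) →*
      Matrix (Fin 4 × Fin k) (Fin 4 × Fin k) F :=
    (Matrix.compRingEquiv (Fin 4) (Fin k) F).toRingHom.toMonoidHom
  have hcomp : (Matrix.SpecialLinearGroup.toGL (n := Fin 4 × Fin k) (R := F)).comp
      (FreeGroup.lift f) = (Units.map φm).comp (FreeGroup.lift gu) := by
    apply FreeGroup.ext_hom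
    intro a
    apply Units.ext
    fin_cases a <;>
      simp only [MonoidHom.comp_apply, FreeGroup.lift_apply_of, Fin.zero_eta, Fin.mk_one,
        Matrix.cons_val_zero, Matrix.cons_val_one, Matrix.head_cons, Units.coe_map,
        MonoidHom.coe_coe, toGL_val, sqUnit_val, Fin.isValue, Fin.reduceFinMk,
        Matrix.cons_val_two, Matrix.tail_cons]
    · exact Va'_eq Ma
    · exact Vb'_eq Mb
    · exact Vc'_eq Mc
  have key : ∀ r : FreeGroup (Fin 3), FreeGroup.lift gu r = 1 → FreeGroup.lift f r = 1 := by
    intro r hg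
    have h1 : Matrix.SpecialLinearGroup.toGL (FreeGroup.lift f r) = 1 := by
      have h2 := DFunLike.congr_fun hcomp r
      simp only [MonoidHom.comp_apply] at h2
      rw [h2, hg, _root_.map_one]
    exact Subtype.ext (congrArg Units.val h1)
  have hXab : Units.val (pc (sqUnit _ hNa) (sqUnit _ hNb))
      = 1 - Matrix.single 1 3 (Ma * Mb) - Matrix.single 1 3 (Mb * Ma) := by
    rw [pc_val, sqUnit_val, sqUnit_val, sqUnit_inv, sqUnit_inv]
    exact r2ab_x Ma Mb
  have hXcb : Units.val (pc (sqUnit _ hNc) (sqUnit _ hNb))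
      = 1 + (Matrix.single 3 0 (Mc * Mb) + Matrix.single 2 1 (Mb * Mc)
          + Matrix.single 2 0 (Mb * (Mc * Mb))) := by
    rw [pc_val, sqUnit_val, sqUnit_val, sqUnit_inv, sqUnit_inv]
    exact r2cb_x Mb Mc
  have hXcbi : Units.val (pc (sqUnit _ hNc) (sqUnit _ hNb))⁻¹
      = 1 - (Matrix.single 3 0 (Mc * Mb) + Matrix.single 2 1 (Mb * Mc)
          + Matrix.single 2 0 (Mb * (Mc * Mb))) := by
    rw [pc_inv, pc_val, sqUnit_val, sqUnit_val, sqUnit_inv, sqUnit_inv]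
    exact r2cb_xi Mb Mc
  have hYcb : Units.val (pc (pc (sqUnit _ hNc) (sqUnit _ hNb)) (sqUnit _ hNb))
      = 1 + Matrix.single 2 0 (Mb * (Mc * Mb)) + Matrix.single 2 0 (Mb * (Mc * Mb)) := by
    rw [pc_val, hXcbi, hXcb, sqUnit_val, sqUnit_inv]
    exact r2cb_y Mb Mc
  have hXca : Units.val (pc (sqUnit _ hNc) (sqUnit _ hNa))
      = 1 + (Matrix.single 3 2 (Mc * Ma) - Matrix.single 0 1 (Ma * Mc)
          - Matrix.single 0 2 (Ma * (Mc * Ma))) := by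
    rw [pc_val, sqUnit_val, sqUnit_val, sqUnit_inv, sqUnit_inv]
    exact r2ca_x Ma Mc
  have hXcai : Units.val (pc (sqUnit _ hNc) (sqUnit _ hNa))⁻¹
      = 1 - (Matrix.single 3 2 (Mc * Ma) - Matrix.single 0 1 (Ma * Mc)
          - Matrix.single 0 2 (Ma * (Mc * Ma))) := by
    rw [pc_inv, pc_val, sqUnit_val, sqUnit_val, sqUnit_inv, sqUnit_inv]
    exact r2ca_xi Ma Mc
  have hYca : Units.val (pc (pc (sqUnit _ hNc) (sqUnit _ hNa)) (sqUnit _ hNa))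
      = 1 - Matrix.single 0 2 (Ma * (Mc * Ma)) - Matrix.single 0 2 (Ma * (Mc * Ma)) := by
    rw [pc_val, hXcai, hXca, sqUnit_val, sqUnit_inv]
    exact r2ca_y Ma Mc
  have g0 : gu 0 = sqUnit _ hNa := rfl
  have g1 : gu 1 = sqUnit _ hNb := rfl
  have g2 : gu 2 = sqUnit _ hNc := rfl
  have hrel : ∀ r ∈ kmsHB22Rels p, FreeGroup.lift f r = 1 := by
    intro r hr
    refine key r ?_
    simp only [kmsHB22Rels, Set.mem_insert_iff, Set.mem_singleton_iff] at hr
    rcases hr with rfl | rfl | rfl | rfl | rfl | rfl | rfl | rfl | rfl | rfl | rfl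
    · rw [map_pow, FreeGroup.lift_apply_of, g0]
      exact sqUnit_pow_eq_one hNa hpS
    · rw [map_pow, FreeGroup.lift_apply_of, g1]
      exact sqUnit_pow_eq_one hNb hpS
    · rw [map_pow, FreeGroup.lift_apply_of, g2]
      exact sqUnit_pow_eq_one hNc hpS
    · simp only [map_pc, FreeGroup.lift_apply_of]
      rw [g0, g1]
      refine pc_eq_one_of_comm (Units.ext ?_)
      simp only [Units.val_mul, hXab, sqUnit_val]
      exact r2ab_comm_a Ma Mb
    · simp only [map_pc, FreeGroup.lift_apply_of]
      rw [g0, g1]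
      refine pc_eq_one_of_comm (Units.ext ?_)
      simp only [Units.val_mul, hXab, sqUnit_val]
      exact r2ab_comm_b Ma Mb
    · simp only [map_pc, FreeGroup.lift_apply_of]
      rw [g1, g2]
      refine pc_eq_one_of_comm (Units.ext ?_)
      simp only [Units.val_mul, hXcb, sqUnit_val]
      exact r2cb_comm_c Mb Mc
    · simp only [map_pc, FreeGroup.lift_apply_of]
      rw [g1, g2]
      refine pc_eq_one_of_comm (Units.ext ?_)
      simp only [Units.val_mul, hYcb, sqUnit_val]
      exact r2cb_yc Mb Mc
    · simp only [map_pc, FreeGroup.lift_apply_of]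
      rw [g1, g2]
      refine pc_eq_one_of_comm (Units.ext ?_)
      simp only [Units.val_mul, hYcb, sqUnit_val]
      exact r2cb_yb Mb Mc
    · simp only [map_pc, FreeGroup.lift_apply_of]
      rw [g0, g2]
      refine pc_eq_one_of_comm (Units.ext ?_)
      simp only [Units.val_mul, hXca, sqUnit_val]
      exact r2ca_comm_c Ma Mc
    · simp only [map_pc, FreeGroup.lift_apply_of]
      rw [g0, g2]
      refine pc_eq_one_of_comm (Units.ext ?_)
      simp only [Units.val_mul, hYca, sqUnit_val]
      exact r2ca_yc Ma Mc
    · simp only [map_pc, FreeGroup.lift_apply_of]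
      rw [g0, g2]
      refine pc_eq_one_of_comm (Units.ext ?_)
      simp only [Units.val_mul, hYca, sqUnit_val]
      exact r2ca_ya Ma Mc
  refine ⟨PresentedGroup.toGroup hrel, ?_, ?_, ?_⟩ <;>
    rw [PresentedGroup.toGroup.of] <;> rfl


end Reps

end KMSAux

/-- Let q = p^e be a positive power of an odd prime p, k ≥ 1, and M_a, M_b, M_c arbitrary
k×k matrices over 𝔽_q.  Then (1) a ↦ V_a, b ↦ V_b, c ↦ V_c extend to a group homomorphism
𝒢_{C̃₂}(p) → SL_{4k}(𝔽_q), and (2) a ↦ V'_a, b ↦ V'_b, c ↦ V'_c extend to a group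
homomorphism 𝒢_{HB₂⁽²⁾}(p) → SL_{4k}(𝔽_q). -/
theorem kms_block_reps_4k (p e k : ℕ) [Fact p.Prime] (hodd : Odd p) (he : 1 ≤ e)
    (hk : 1 ≤ k)
    (Ma Mb Mc : Matrix (Fin k) (Fin k) (GaloisField p e)) :
    (∃ ρ : PresentedGroup (kmsC2Rels p) →*
        Matrix.SpecialLinearGroup (Fin 4 × Fin k) (GaloisField p e),
      (↑(ρ (PresentedGroup.of 0)) : Matrix (Fin 4 × Fin k) (Fin 4 × Fin k)
          (GaloisField p e)) = Va Ma ∧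
      (↑(ρ (PresentedGroup.of 1)) : Matrix (Fin 4 × Fin k) (Fin 4 × Fin k)
          (GaloisField p e)) = Vb Mb ∧
      (↑(ρ (PresentedGroup.of 2)) : Matrix (Fin 4 × Fin k) (Fin 4 × Fin k)
          (GaloisField p e)) = Vc Mc) ∧
    (∃ ρ' : PresentedGroup (kmsHB22Rels p) →*
        Matrix.SpecialLinearGroup (Fin 4 × Fin k) (GaloisField p e),
      (↑(ρ' (PresentedGroup.of 0)) : Matrix (Fin 4 × Fin k) (Fin 4 × Fin k)
          (GaloisField p e)) = Va' Ma ∧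
      (↑(ρ' (PresentedGroup.of 1)) : Matrix (Fin 4 × Fin k) (Fin 4 × Fin k)
          (GaloisField p e)) = Vb' Mb ∧
      (↑(ρ' (PresentedGroup.of 2)) : Matrix (Fin 4 × Fin k) (Fin 4 × Fin k)
          (GaloisField p e)) = Vc' Mc) := by
  constructor
  · exact KMSAux.rep1 hk Ma Mb Mc
  · exact KMSAux.rep2 hk Ma Mb Mc
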